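/- (Wall crossing formula) Let P = (Δ, F) be a simple multi-polytope of dimension n, F one of the hyperplanes F_i, and let u_α, u_β ∈ V* \ ∪F_i be such that the segment from u_α to u_β crosses F transversely at μ and meets no other hyperplane of the arrangement. Then DH_P(u_α) − DH_P(u_β) = Σ_{i: F_i = F} sign⟨u_β − u_α, v_i⟩ · DH_{P_i}(μ − f_i), where P_i is the projected multi-polytope on the hyperplane (V*)_i = {u : ⟨u, v_i⟩ = 0} obtained by translating F_i by a chosen point −f_i ∈ −F_i. -/

import Mathlib

open Finset

/-- The pairing between a covector and a vector in `ℝⁿ`. -/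
def dotp {n : ℕ} (x y : Fin n → ℝ) : ℝ := ∑ k, x k * y k

/-- A (simplicial) multi-fan of dimension `n` with rays indexed by `{1,…,d}`:
an augmented simplicial set `S`, ray vectors `v i` spanning the simplicial cones
`C(I) = pos span {v i : i ∈ I}`, and a weight `w` on simplices (the difference
`w = w⁺ − w⁻` of the two weight functions, restricted to top simplices is what matters). -/
structure MultiFan (n d : ℕ) where
  S : Finset (Finset (Fin d))
  empty_mem : ∅ ∈ S
  downClosed : ∀ I ∈ S, ∀ J ⊆ I, J ∈ S
  card_le : ∀ I ∈ S, I.card ≤ n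
  v : Fin d → (Fin n → ℝ)
  indep : ∀ I ∈ S, LinearIndependent ℝ (fun i : {x // x ∈ I} => v i.1)
  w : Finset (Fin d) → ℤ

namespace MultiFan

variable {n d : ℕ}

/-- `x` is generic for the projected multi-fan `Δ_K`: it avoids every linear subspace
spanned by a cone (containing `C(K)`) of dimension `< n`. -/
def GenericFor (Δ : MultiFan n d) (K : Finset (Fin d)) (x : Fin n → ℝ) : Prop :=
  ∀ L ∈ Δ.S, K ⊆ L → L.card < n → x ∉ Submodule.span ℝ (Δ.v '' (L : Set (Fin d)))

def Generic (Δ : MultiFan n d) (x : Fin n → ℝ) : Prop := Δ.GenericFor ∅ x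

/-- `x` lies (mod the span of `C(K)`) in the projected cone `C_K(I)`. -/
def InProjCone (Δ : MultiFan n d) (K I : Finset (Fin d)) (x : Fin n → ℝ) : Prop :=
  ∃ a : Fin d → ℝ, (∀ j ∈ I \ K, 0 ≤ a j) ∧
    (x - ∑ j ∈ I \ K, a j • Δ.v j) ∈ Submodule.span ℝ (Δ.v '' (K : Set (Fin d)))

open scoped Classical in
/-- `d_x` for the projected multi-fan `Δ_K`: the sum of the weights of top cones whose
projection contains the projection of `x`. -/
noncomputable def dv (Δ : MultiFan n d) (K : Finset (Fin d)) (x : Fin n → ℝ) : ℤ :=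
  ∑ I ∈ Δ.S.filter (fun I => I.card = n ∧ K ⊆ I ∧ Δ.InProjCone K I x), Δ.w I

/-- Pre-completeness of the projected multi-fan `Δ_K`. -/
def PreCompleteAt (Δ : MultiFan n d) (K : Finset (Fin d)) : Prop :=
  (∃ I ∈ Δ.S, K ⊆ I ∧ I.card = n) ∧
  ∀ x y : Fin n → ℝ, Δ.GenericFor K x → Δ.GenericFor K y → Δ.dv K x = Δ.dv K y

/-- Completeness: every projected multi-fan is pre-complete. -/
def Complete (Δ : MultiFan n d) : Prop := ∀ K ∈ Δ.S, Δ.PreCompleteAt K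

open scoped Classical in
/-- The Duistermaat–Heckman function of the simple multi-polytope `(Δ, {F_i})`, where
`F_i = {u : ⟨u, v i⟩ = c i}`, the data `uu I i = u_i^I` is the dual basis of `{v i : i ∈ I}`
and `ξ ∈ V` is a generic vector.  For `I ∈ Σ^{(n)}` the coefficient of `u − u_I` on `u_i^I`
is `⟨u, v i⟩ − c i`, so membership in the cone `C^*(I)^+` is expressed by the conditions below. -/
noncomputable def DH (Δ : MultiFan n d) (c : Fin d → ℝ)
    (uu : Finset (Fin d) → Fin d → (Fin n → ℝ)) (ξ : Fin n → ℝ) (u : Fin n → ℝ) : ℤ :=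
  ∑ I ∈ Δ.S.filter (fun I => I.card = n),
    if (∀ i ∈ I, (0 < dotp (uu I i) ξ ∧ c i ≤ dotp u (Δ.v i)) ∨
                 (dotp (uu I i) ξ < 0 ∧ dotp u (Δ.v i) ≤ c i))
    then (-1 : ℤ) ^ (I.filter fun i => 0 < dotp (uu I i) ξ).card * Δ.w I
    else 0

/-- `uu I i = u_i^I` is the basis dual to `{v i : i ∈ I}` for each top simplex `I`. -/
def DualBasis (Δ : MultiFan n d) (uu : Finset (Fin d) → Fin d → (Fin n → ℝ)) : Prop :=
  ∀ I ∈ Δ.S, I.card = n → ∀ i ∈ I, ∀ j ∈ I,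
    dotp (uu I i) (Δ.v j) = if i = j then 1 else 0

/-- Genericity of `ξ` needed for the DH function: `⟨u_i^I, ξ⟩ ≠ 0` for all `I, i`. -/
def GenericDual (Δ : MultiFan n d) (uu : Finset (Fin d) → Fin d → (Fin n → ℝ))
    (ξ : Fin n → ℝ) : Prop :=
  ∀ I ∈ Δ.S, I.card = n → ∀ i ∈ I, dotp (uu I i) ξ ≠ 0

end MultiFan

open scoped Classical in
/-- The Duistermaat–Heckman function of the projected multi-polytope `P_i` evaluated at
`μ − f_i` (for `μ ∈ F_i`): since the dual basis of the projected rays `{v̄_j : j ∈ I∖{i}}`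
is `{u_j^I : j ∈ I∖{i}}` and the coefficient of `(μ − f_i) − (u_I − f_i)` on `u_j^I` is
`⟨μ, v_j⟩ − c_j`, the value `DH_{P_i}(μ − f_i)` is given by the following expression,
independent of the chosen `f_i ∈ F_i`. -/
noncomputable def MultiFan.DHproj {n d : ℕ} (Δ : MultiFan n d) (c : Fin d → ℝ)
    (uu : Finset (Fin d) → Fin d → (Fin n → ℝ)) (ξ : Fin n → ℝ) (i : Fin d)
    (μ : Fin n → ℝ) : ℤ :=
  ∑ I ∈ Δ.S.filter (fun I => I.card = n ∧ i ∈ I),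
    if (∀ j ∈ I.erase i, (0 < dotp (uu I j) ξ ∧ c j ≤ dotp μ (Δ.v j)) ∨
                 (dotp (uu I j) ξ < 0 ∧ dotp μ (Δ.v j) ≤ c j))
    then (-1 : ℤ) ^ ((I.erase i).filter fun j => 0 < dotp (uu I j) ξ).card * Δ.w I
    else 0


lemma dotp_add_left {n : ℕ} (x y z : Fin n → ℝ) : dotp (x + y) z = dotp x z + dotp y z := by
  simp [dotp, add_mul, Finset.sum_add_distrib]

lemma dotp_smul_left {n : ℕ} (t : ℝ) (x z : Fin n → ℝ) : dotp (t • x) z = t * dotp x z := by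
  simp [dotp, Finset.mul_sum, mul_assoc]

lemma dotp_sub_left {n : ℕ} (x y z : Fin n → ℝ) : dotp (x - y) z = dotp x z - dotp y z := by
  simp [dotp, sub_mul, Finset.sum_sub_distrib]

lemma aux_le (a b : ℝ) (h : a ≠ b) : b ≤ a ↔ 0 < a - b := by
  constructor
  · intro h'; have := lt_of_le_of_ne h' (Ne.symm h); linarith
  · intro h'; linarith

lemma aux_le' (a b : ℝ) : a ≤ b ↔ ¬(0 < a - b) := by
  constructor
  · intro h' h''; linarith
  · intro h'; have := not_lt.mp h'; linarith

lemma segsign (A B : ℝ) (h : ∀ t : ℝ, 0 ≤ t → t ≤ 1 → A + t * (B - A) ≠ 0) : (0 < A ↔ 0 < B) := by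
  have hA : A ≠ 0 := by have := h 0 le_rfl zero_le_one; simpa using this
  have hB : B ≠ 0 := by have := h 1 zero_le_one le_rfl; simpa using this
  constructor
  · intro hA0
    by_contra hB0
    have hB0' : B < 0 := lt_of_le_of_ne (not_lt.mp hB0) hB
    have hAB : 0 < A - B := by linarith
    refine h (A / (A - B)) (by positivity) ((div_le_one hAB).mpr (by linarith)) ?_
    field_simp
    ring
  · intro hB0
    by_contra hA0
    have hA0' : A < 0 := lt_of_le_of_ne (not_lt.mp hA0) hA
    have hAB : 0 < B - A := by linarith
    refine h ((-A) / (B - A)) (div_nonneg (by linarith) (by linarith)) ((div_le_one hAB).mpr (by linarith)) ?_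
    field_simp
    ring

open scoped Classical in
/-- **Lemma 5.3** (Wall crossing formula).  If the segment from `u_α` to `u_β` crosses the
wall `F = F_{i₀}` transversely at `μ` and meets no other hyperplane of the arrangement, then
`DH_P(u_α) − DH_P(u_β) = ∑_{i : F_i = F} sign⟨u_β − u_α, v_i⟩ · DH_{P_i}(μ − f_i)`. -/
theorem stmt5 (n d : ℕ) (Δ : MultiFan n d) (hC : Δ.Complete)
    (c : Fin d → ℝ) (uu : Finset (Fin d) → Fin d → (Fin n → ℝ))
    (huu : Δ.DualBasis uu) (ξ : Fin n → ℝ) (hξ : Δ.GenericDual uu ξ)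
    (i₀ : Fin d) (h₀ : {i₀} ∈ Δ.S)
    (uα uβ μ : Fin n → ℝ) (t₀ : ℝ) (ht0 : 0 < t₀) (ht1 : t₀ < 1)
    (hμ : μ = uα + t₀ • (uβ - uα))
    (hwall : dotp μ (Δ.v i₀) = c i₀)
    (htrans : dotp (uβ - uα) (Δ.v i₀) ≠ 0)
    (hα : ∀ j : Fin d, {j} ∈ Δ.S → dotp uα (Δ.v j) ≠ c j)
    (hβ : ∀ j : Fin d, {j} ∈ Δ.S → dotp uβ (Δ.v j) ≠ c j)
    (hother : ∀ j : Fin d, {j} ∈ Δ.S →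
      {x : Fin n → ℝ | dotp x (Δ.v j) = c j} ≠ {x : Fin n → ℝ | dotp x (Δ.v i₀) = c i₀} →
      ∀ t : ℝ, 0 ≤ t → t ≤ 1 → dotp (uα + t • (uβ - uα)) (Δ.v j) ≠ c j) :
    Δ.DH c uu ξ uα - Δ.DH c uu ξ uβ
      = ∑ i ∈ Finset.univ.filter (fun i : Fin d => {i} ∈ Δ.S ∧
          {x : Fin n → ℝ | dotp x (Δ.v i) = c i}
            = {x : Fin n → ℝ | dotp x (Δ.v i₀) = c i₀}),
          (if 0 < dotp (uβ - uα) (Δ.v i) then 1 else -1 : ℤ) * Δ.DHproj c uu ξ i μ := by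
  classical
  have hseg : ∀ (j : Fin d) (t : ℝ), dotp (uα + t • (uβ - uα)) (Δ.v j)
      = dotp uα (Δ.v j) + t * (dotp uβ (Δ.v j) - dotp uα (Δ.v j)) := by
    intro j t; rw [dotp_add_left, dotp_smul_left, dotp_sub_left]
  have hdμ : ∀ j : Fin d, dotp μ (Δ.v j)
      = dotp uα (Δ.v j) + t₀ * (dotp uβ (Δ.v j) - dotp uα (Δ.v j)) := by
    intro j; rw [hμ, hseg]
  have hsub : ∀ j : Fin d, dotp (uβ - uα) (Δ.v j) = dotp uβ (Δ.v j) - dotp uα (Δ.v j) :=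
    fun j => dotp_sub_left _ _ _
  have hsing : ∀ I ∈ Δ.S, ∀ j ∈ I, ({j} : Finset (Fin d)) ∈ Δ.S := by
    intro I hI j hj
    exact Δ.downClosed I hI {j} (Finset.singleton_subset_iff.mpr hj)
  have hWμ : ∀ j : Fin d,
      {x : Fin n → ℝ | dotp x (Δ.v j) = c j} = {x : Fin n → ℝ | dotp x (Δ.v i₀) = c i₀} →
      dotp μ (Δ.v j) = c j := by
    intro j hEq
    have hm : μ ∈ {x : Fin n → ℝ | dotp x (Δ.v i₀) = c i₀} := hwall
    rw [← hEq] at hm; exact hm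
  have hWs : ∀ j : Fin d, {j} ∈ Δ.S →
      ({x : Fin n → ℝ | dotp x (Δ.v j) = c j} = {x : Fin n → ℝ | dotp x (Δ.v i₀) = c i₀}) →
      dotp uβ (Δ.v j) - dotp uα (Δ.v j) ≠ 0 := by
    intro j hjS hEq h0
    have h1 := hdμ j
    rw [h0, mul_zero, add_zero] at h1
    exact hα j hjS (h1.symm.trans (hWμ j hEq))
  have hNW : ∀ j : Fin d, {j} ∈ Δ.S →
      ({x : Fin n → ℝ | dotp x (Δ.v j) = c j} ≠ {x : Fin n → ℝ | dotp x (Δ.v i₀) = c i₀}) →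
      ((0 < dotp uα (Δ.v j) - c j ↔ 0 < dotp uβ (Δ.v j) - c j)
        ∧ (0 < dotp uα (Δ.v j) - c j ↔ 0 < dotp μ (Δ.v j) - c j)
        ∧ dotp uα (Δ.v j) ≠ c j ∧ dotp uβ (Δ.v j) ≠ c j ∧ dotp μ (Δ.v j) ≠ c j) := by
    intro j hjS hne
    set A := dotp uα (Δ.v j) - c j with hA
    set B := dotp uβ (Δ.v j) - c j with hB
    have hpath : ∀ t : ℝ, 0 ≤ t → t ≤ 1 → A + t * (B - A) ≠ 0 := by
      intro t ht0 ht1 h0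
      refine hother j hjS hne t ht0 ht1 ?_
      rw [hseg j t]
      rw [hA, hB] at h0; linarith
    have e1 : 0 < A ↔ 0 < B := segsign A B hpath
    have hμval : dotp μ (Δ.v j) - c j = A + t₀ * (B - A) := by
      rw [hdμ j]; rw [hA, hB]; ring
    have e2 : 0 < A ↔ 0 < dotp μ (Δ.v j) - c j := by
      rw [hμval]
      refine segsign A (A + t₀ * (B - A)) ?_
      intro t ht0 ht1
      have h' := hpath (t * t₀) (by positivity)
        (by nlinarith)
      intro h0
      refine h' ?_
      rw [← h0]; ring
    have hAne : A ≠ 0 := by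
      have := hpath 0 le_rfl zero_le_one; simpa using this
    have hBne : B ≠ 0 := by
      have := hpath 1 zero_le_one le_rfl; simpa using this
    have hMne : dotp μ (Δ.v j) - c j ≠ 0 := by
      rw [hμval]; exact hpath t₀ (le_of_lt ht0) (le_of_lt ht1)
    refine ⟨e1, e2, fun h => hAne (by rw [hA, h]; ring),
      fun h => hBne (by rw [hB, h]; ring), fun h => hMne (by rw [h]; ring)⟩
  have key : ∀ I ∈ Δ.S.filter (fun I => I.card = n),
      ((if (∀ j ∈ I, (0 < dotp (uu I j) ξ ∧ c j ≤ dotp uα (Δ.v j)) ∨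
            (dotp (uu I j) ξ < 0 ∧ dotp uα (Δ.v j) ≤ c j))
        then (-1 : ℤ) ^ (I.filter fun j => 0 < dotp (uu I j) ξ).card * Δ.w I else 0)
      - (if (∀ j ∈ I, (0 < dotp (uu I j) ξ ∧ c j ≤ dotp uβ (Δ.v j)) ∨
            (dotp (uu I j) ξ < 0 ∧ dotp uβ (Δ.v j) ≤ c j))
        then (-1 : ℤ) ^ (I.filter fun j => 0 < dotp (uu I j) ξ).card * Δ.w I else 0))
      = ∑ i ∈ Finset.univ.filter (fun i : Fin d => {i} ∈ Δ.S ∧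
          {x : Fin n → ℝ | dotp x (Δ.v i) = c i} = {x : Fin n → ℝ | dotp x (Δ.v i₀) = c i₀}),
          (if i ∈ I then
            (if 0 < dotp (uβ - uα) (Δ.v i) then 1 else -1 : ℤ) *
            (if (∀ j ∈ I.erase i, (0 < dotp (uu I j) ξ ∧ c j ≤ dotp μ (Δ.v j)) ∨
                  (dotp (uu I j) ξ < 0 ∧ dotp μ (Δ.v j) ≤ c j))
              then (-1 : ℤ) ^ ((I.erase i).filter fun j => 0 < dotp (uu I j) ξ).card * Δ.w I
              else 0)
           else 0) := by
    intro I hI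
    rw [Finset.mem_filter] at hI
    obtain ⟨hIS, hIcard⟩ := hI
    by_cases hex : ∃ i ∈ I,
        {x : Fin n → ℝ | dotp x (Δ.v i) = c i} = {x : Fin n → ℝ | dotp x (Δ.v i₀) = c i₀}
    · obtain ⟨i, hiI, hiEq⟩ := hex
      have hiS : ({i} : Finset (Fin d)) ∈ Δ.S := hsing I hIS i hiI
      have huniq : ∀ j ∈ I,
          {x : Fin n → ℝ | dotp x (Δ.v j) = c j} = {x : Fin n → ℝ | dotp x (Δ.v i₀) = c i₀} →
          j = i := by
        intro j hj hjEq
        by_contra hne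
        have h1 := huu I hIS hIcard j hj j hj
        rw [if_pos rfl] at h1
        have h2 := huu I hIS hIcard j hj i hiI
        rw [if_neg hne] at h2
        have hm : (μ + uu I j) ∈ {x : Fin n → ℝ | dotp x (Δ.v i) = c i} := by
          show dotp (μ + uu I j) (Δ.v i) = c i
          rw [dotp_add_left, hWμ i hiEq, h2, add_zero]
        rw [hiEq, ← hjEq] at hm
        have h3 : dotp (μ + uu I j) (Δ.v j) = c j := hm
        rw [dotp_add_left, hWμ j hjEq, h1] at h3
        linarith
      have hjF : ∀ j ∈ I.erase i,
          (((0 < dotp (uu I j) ξ ∧ c j ≤ dotp uα (Δ.v j)) ∨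
              (dotp (uu I j) ξ < 0 ∧ dotp uα (Δ.v j) ≤ c j)) ↔
            ((0 < dotp (uu I j) ξ ∧ c j ≤ dotp uβ (Δ.v j)) ∨
              (dotp (uu I j) ξ < 0 ∧ dotp uβ (Δ.v j) ≤ c j))) ∧
          (((0 < dotp (uu I j) ξ ∧ c j ≤ dotp μ (Δ.v j)) ∨
              (dotp (uu I j) ξ < 0 ∧ dotp μ (Δ.v j) ≤ c j)) ↔
            ((0 < dotp (uu I j) ξ ∧ c j ≤ dotp uα (Δ.v j)) ∨
              (dotp (uu I j) ξ < 0 ∧ dotp uα (Δ.v j) ≤ c j))) := by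
        intro j hj
        obtain ⟨hne, hjI⟩ := Finset.mem_erase.mp hj
        have hjS := hsing I hIS j hjI
        have hjne : {x : Fin n → ℝ | dotp x (Δ.v j) = c j}
            ≠ {x : Fin n → ℝ | dotp x (Δ.v i₀) = c i₀} :=
          fun hEq => hne (huniq j hjI hEq)
        obtain ⟨e1, e2, hAne, hBne, hMne⟩ := hNW j hjS hjne
        constructor
        · rw [aux_le _ _ hAne, aux_le _ _ hBne, aux_le' (dotp uα (Δ.v j)) (c j),
            aux_le' (dotp uβ (Δ.v j)) (c j), e1]
        · rw [aux_le _ _ hMne, aux_le _ _ hAne, aux_le' (dotp μ (Δ.v j)) (c j),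
            aux_le' (dotp uα (Δ.v j)) (c j), e2]
      have hiW : i ∈ Finset.univ.filter (fun i : Fin d => {i} ∈ Δ.S ∧
          {x : Fin n → ℝ | dotp x (Δ.v i) = c i} = {x : Fin n → ℝ | dotp x (Δ.v i₀) = c i₀}) :=
        Finset.mem_filter.mpr ⟨Finset.mem_univ i, hiS, hiEq⟩
      rw [Finset.sum_eq_single_of_mem i hiW (fun b hb hbne => by
        rw [Finset.mem_filter] at hb
        exact if_neg (fun hbI => hbne (huniq b hbI hb.2.2)))]
      rw [if_pos hiI]
      by_cases hP : ∀ j ∈ I.erase i, (0 < dotp (uu I j) ξ ∧ c j ≤ dotp μ (Δ.v j)) ∨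
          (dotp (uu I j) ξ < 0 ∧ dotp μ (Δ.v j) ≤ c j)
      swap
      · rw [if_neg hP, mul_zero]
        have hfα : ¬(∀ j ∈ I, (0 < dotp (uu I j) ξ ∧ c j ≤ dotp uα (Δ.v j)) ∨
            (dotp (uu I j) ξ < 0 ∧ dotp uα (Δ.v j) ≤ c j)) :=
          fun h => hP (fun j hj => ((hjF j hj).2).mpr (h j (Finset.mem_of_mem_erase hj)))
        have hfβ : ¬(∀ j ∈ I, (0 < dotp (uu I j) ξ ∧ c j ≤ dotp uβ (Δ.v j)) ∨
            (dotp (uu I j) ξ < 0 ∧ dotp uβ (Δ.v j) ≤ c j)) :=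
          fun h => hP (fun j hj => ((hjF j hj).2).mpr
            (((hjF j hj).1).mpr (h j (Finset.mem_of_mem_erase hj))))
        rw [if_neg hfα, if_neg hfβ, sub_self]
      · rw [if_pos hP]
        have hμi : dotp μ (Δ.v i) = c i := hWμ i hiEq
        have hs0 : dotp uβ (Δ.v i) - dotp uα (Δ.v i) ≠ 0 := hWs i hiS hiEq
        have hd := hdμ i
        rw [hμi] at hd
        have hins : I = insert i (I.erase i) := (Finset.insert_erase hiI).symm
        have hξi : dotp (uu I i) ξ ≠ 0 := hξ I hIS hIcard i hiI
        rcases hξi.lt_or_gt with hneg | hpos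
        · -- ξ_i < 0 : sign of I equals sign of I.erase i
          have hfilt : I.filter (fun j => 0 < dotp (uu I j) ξ)
              = (I.erase i).filter (fun j => 0 < dotp (uu I j) ξ) := by
            rw [Finset.filter_erase, Finset.erase_eq_of_notMem]
            intro hmem
            exact absurd (Finset.mem_filter.mp hmem).2 (not_lt.mpr hneg.le)
          rcases hs0.lt_or_gt with hsneg | hspos
          · -- s < 0
            have hprod : (1 - t₀) * (dotp uβ (Δ.v i) - dotp uα (Δ.v i)) < 0 :=
              mul_neg_of_pos_of_neg (by linarith) hsneg
            have hprod2 : t₀ * (dotp uβ (Δ.v i) - dotp uα (Δ.v i)) < 0 :=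
              mul_neg_of_pos_of_neg ht0 hsneg
            have hcα : ¬(∀ j ∈ I, (0 < dotp (uu I j) ξ ∧ c j ≤ dotp uα (Δ.v j)) ∨
                (dotp (uu I j) ξ < 0 ∧ dotp uα (Δ.v j) ≤ c j)) := by
              intro h
              rcases h i hiI with ⟨hp, _⟩ | ⟨_, hle⟩
              · linarith
              · linarith
            have hcβ : ∀ j ∈ I, (0 < dotp (uu I j) ξ ∧ c j ≤ dotp uβ (Δ.v j)) ∨
                (dotp (uu I j) ξ < 0 ∧ dotp uβ (Δ.v j) ≤ c j) := by
              intro j hj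
              by_cases hji : j = i
              · subst hji; right; exact ⟨hneg, by linarith⟩
              · exact ((hjF j (Finset.mem_erase.mpr ⟨hji, hj⟩)).1).mp
                  (((hjF j (Finset.mem_erase.mpr ⟨hji, hj⟩)).2).mp
                    (hP j (Finset.mem_erase.mpr ⟨hji, hj⟩)))
            rw [if_neg hcα, if_pos hcβ, if_neg (by rw [hsub i]; linarith :
              ¬(0 < dotp (uβ - uα) (Δ.v i))), hfilt]
            ring
          · -- 0 < s
            have hprod : 0 < (1 - t₀) * (dotp uβ (Δ.v i) - dotp uα (Δ.v i)) :=
              mul_pos (by linarith) hspos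
            have hprod2 : 0 < t₀ * (dotp uβ (Δ.v i) - dotp uα (Δ.v i)) :=
              mul_pos ht0 hspos
            have hcα : ∀ j ∈ I, (0 < dotp (uu I j) ξ ∧ c j ≤ dotp uα (Δ.v j)) ∨
                (dotp (uu I j) ξ < 0 ∧ dotp uα (Δ.v j) ≤ c j) := by
              intro j hj
              by_cases hji : j = i
              · subst hji; right; exact ⟨hneg, by linarith⟩
              · exact ((hjF j (Finset.mem_erase.mpr ⟨hji, hj⟩)).2).mp
                  (hP j (Finset.mem_erase.mpr ⟨hji, hj⟩))
            have hcβ : ¬(∀ j ∈ I, (0 < dotp (uu I j) ξ ∧ c j ≤ dotp uβ (Δ.v j)) ∨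
                (dotp (uu I j) ξ < 0 ∧ dotp uβ (Δ.v j) ≤ c j)) := by
              intro h
              rcases h i hiI with ⟨hp, _⟩ | ⟨_, hle⟩
              · linarith
              · linarith
            rw [if_pos hcα, if_neg hcβ, if_pos (by rw [hsub i]; linarith :
              (0 < dotp (uβ - uα) (Δ.v i))), hfilt]
            ring
        · -- 0 < ξ_i : sign of I is minus sign of I.erase i
          have hfilt : I.filter (fun j => 0 < dotp (uu I j) ξ)
              = insert i ((I.erase i).filter (fun j => 0 < dotp (uu I j) ξ)) := by
            rw [Finset.filter_erase,
              Finset.insert_erase (Finset.mem_filter.mpr ⟨hiI, hpos⟩)]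
          have hcard : (I.filter (fun j => 0 < dotp (uu I j) ξ)).card
              = ((I.erase i).filter (fun j => 0 < dotp (uu I j) ξ)).card + 1 := by
            rw [hfilt, Finset.card_insert_of_notMem]
            intro hmem
            exact (Finset.mem_erase.mp (Finset.mem_filter.mp hmem).1).1 rfl
          rcases hs0.lt_or_gt with hsneg | hspos
          · -- s < 0
            have hprod : (1 - t₀) * (dotp uβ (Δ.v i) - dotp uα (Δ.v i)) < 0 :=
              mul_neg_of_pos_of_neg (by linarith) hsneg
            have hprod2 : t₀ * (dotp uβ (Δ.v i) - dotp uα (Δ.v i)) < 0 :=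
              mul_neg_of_pos_of_neg ht0 hsneg
            have hcα : ∀ j ∈ I, (0 < dotp (uu I j) ξ ∧ c j ≤ dotp uα (Δ.v j)) ∨
                (dotp (uu I j) ξ < 0 ∧ dotp uα (Δ.v j) ≤ c j) := by
              intro j hj
              by_cases hji : j = i
              · subst hji; left; exact ⟨hpos, by linarith⟩
              · exact ((hjF j (Finset.mem_erase.mpr ⟨hji, hj⟩)).2).mp
                  (hP j (Finset.mem_erase.mpr ⟨hji, hj⟩))
            have hcβ : ¬(∀ j ∈ I, (0 < dotp (uu I j) ξ ∧ c j ≤ dotp uβ (Δ.v j)) ∨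
                (dotp (uu I j) ξ < 0 ∧ dotp uβ (Δ.v j) ≤ c j)) := by
              intro h
              rcases h i hiI with ⟨_, hle⟩ | ⟨hn, _⟩
              · linarith
              · linarith
            rw [if_pos hcα, if_neg hcβ, if_neg (by rw [hsub i]; linarith :
              ¬(0 < dotp (uβ - uα) (Δ.v i))), hcard, pow_succ]
            ring
          · -- 0 < s
            have hprod : 0 < (1 - t₀) * (dotp uβ (Δ.v i) - dotp uα (Δ.v i)) :=
              mul_pos (by linarith) hspos
            have hprod2 : 0 < t₀ * (dotp uβ (Δ.v i) - dotp uα (Δ.v i)) :=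
              mul_pos ht0 hspos
            have hcα : ¬(∀ j ∈ I, (0 < dotp (uu I j) ξ ∧ c j ≤ dotp uα (Δ.v j)) ∨
                (dotp (uu I j) ξ < 0 ∧ dotp uα (Δ.v j) ≤ c j)) := by
              intro h
              rcases h i hiI with ⟨_, hle⟩ | ⟨hn, _⟩
              · linarith
              · linarith
            have hcβ : ∀ j ∈ I, (0 < dotp (uu I j) ξ ∧ c j ≤ dotp uβ (Δ.v j)) ∨
                (dotp (uu I j) ξ < 0 ∧ dotp uβ (Δ.v j) ≤ c j) := by
              intro j hj
              by_cases hji : j = i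
              · subst hji; left; exact ⟨hpos, by linarith⟩
              · exact ((hjF j (Finset.mem_erase.mpr ⟨hji, hj⟩)).1).mp
                  (((hjF j (Finset.mem_erase.mpr ⟨hji, hj⟩)).2).mp
                    (hP j (Finset.mem_erase.mpr ⟨hji, hj⟩)))
            rw [if_neg hcα, if_pos hcβ, if_pos (by rw [hsub i]; linarith :
              (0 < dotp (uβ - uα) (Δ.v i))), hcard, pow_succ]
            ring
    · -- no wall ray in I
      have hiff : (∀ j ∈ I, (0 < dotp (uu I j) ξ ∧ c j ≤ dotp uα (Δ.v j)) ∨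
            (dotp (uu I j) ξ < 0 ∧ dotp uα (Δ.v j) ≤ c j)) ↔
          (∀ j ∈ I, (0 < dotp (uu I j) ξ ∧ c j ≤ dotp uβ (Δ.v j)) ∨
            (dotp (uu I j) ξ < 0 ∧ dotp uβ (Δ.v j) ≤ c j)) := by
        refine forall₂_congr ?_
        intro j hj
        have hjS := hsing I hIS j hj
        have hjne : {x : Fin n → ℝ | dotp x (Δ.v j) = c j}
            ≠ {x : Fin n → ℝ | dotp x (Δ.v i₀) = c i₀} :=
          fun hEq => hex ⟨j, hj, hEq⟩
        obtain ⟨e1, _, hAne, hBne, _⟩ := hNW j hjS hjne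
        rw [aux_le _ _ hAne, aux_le _ _ hBne, aux_le' (dotp uα (Δ.v j)) (c j),
          aux_le' (dotp uβ (Δ.v j)) (c j), e1]
      rw [if_congr hiff rfl rfl, sub_self]
      symm
      refine Finset.sum_eq_zero ?_
      intro i hiW
      rw [Finset.mem_filter] at hiW
      exact if_neg (fun hiI => hex ⟨i, hiI, hiW.2.2⟩)
  simp only [MultiFan.DH, MultiFan.DHproj]
  rw [← Finset.sum_sub_distrib]
  refine Eq.trans (Finset.sum_congr rfl fun I hI => key I hI) ?_
  rw [Finset.sum_comm]
  refine Finset.sum_congr rfl fun i _ => ?_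
  conv_rhs => rw [show Δ.S.filter (fun I => I.card = n ∧ i ∈ I)
      = (Δ.S.filter (fun I => I.card = n)).filter (fun I => i ∈ I) from
      (Finset.filter_filter _ _ _).symm, Finset.mul_sum, Finset.sum_filter]
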